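/- Let n ≥ 2 and let A₁ = G Gᵀ, A₂ = H Hᵀ, and let S be the discrete sine transform matrix of order n-1. Then A₁ ⊗ A₂ + A₂ ⊗ A₁ = (S ⊗ S)·(Λ₁ ⊗ Λ₂ + Λ₂ ⊗ Λ₁)·(S ⊗ S), where Λ₁ and Λ₂ are the diagonal matrices with diagonal entries λ_k = 4 sin²(kπ/(2n)) and μ_k = 4 cos²(kπ/(2n)) respectively; in particular Λ₁ ⊗ Λ₂ + Λ₂ ⊗ Λ₁ is the diagonal matrix whose ((i,j),(i,j)) entry equals λ_i μ_j + μ_i λ_j. -/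

import Mathlib

open Matrix Real
open scoped Kronecker

def Emat (n : ℕ) : Matrix (Fin (n - 1)) (Fin n) ℝ :=
  Matrix.of fun i j => if (j : ℕ) = (i : ℕ) + 1 then 1 else 0

def Zmat (n : ℕ) : Matrix (Fin (n - 1)) (Fin n) ℝ :=
  Matrix.of fun i j => if (j : ℕ) = (i : ℕ) then 1 else 0

def Gmat (n : ℕ) : Matrix (Fin (n - 1)) (Fin n) ℝ := Emat n - Zmat n

def Hmat (n : ℕ) : Matrix (Fin (n - 1)) (Fin n) ℝ := Emat n + Zmat n

/-- The discrete sine transform matrix of order `n-1`. -/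
noncomputable def Smat (n : ℕ) : Matrix (Fin (n - 1)) (Fin (n - 1)) ℝ :=
  Matrix.of fun j k =>
    Real.sqrt (2 / n) * Real.sin (((j : ℕ) + 1) * ((k : ℕ) + 1) * Real.pi / n)

/-- `λ_k = 4 sin²(kπ/(2n))` (1-based `k`). -/
noncomputable def lamGG (n : ℕ) (k : Fin (n - 1)) : ℝ :=
  4 * Real.sin (((k : ℕ) + 1) * Real.pi / (2 * n)) ^ 2

/-- `μ_k = 4 cos²(kπ/(2n))` (1-based `k`). -/
noncomputable def muHH (n : ℕ) (k : Fin (n - 1)) : ℝ :=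
  4 * Real.cos (((k : ℕ) + 1) * Real.pi / (2 * n)) ^ 2

/-- with `A₁ = G Gᵀ`, `A₂ = H Hᵀ`, `Λ₁ = diag(λ)`, `Λ₂ = diag(μ)`,
`A₁ ⊗ A₂ + A₂ ⊗ A₁ = (S ⊗ S)(Λ₁ ⊗ Λ₂ + Λ₂ ⊗ Λ₁)(S ⊗ S)`; in particular
`Λ₁ ⊗ Λ₂ + Λ₂ ⊗ Λ₁` is the diagonal matrix with entries `λ_i μ_j + μ_i λ_j`. -/


lemma sum_ind {N : ℕ} (a b : ℕ) (ha : a < N) :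
    ∑ t : Fin N, (if (t:ℕ) = a then (1:ℝ) else 0) * (if (t:ℕ) = b then 1 else 0)
      = if a = b then 1 else 0 := by
  rw [Finset.sum_eq_single (⟨a, ha⟩ : Fin N)]
  · by_cases h : a = b <;> simp [h]
  · intro t _ ht
    have : (t:ℕ) ≠ a := fun hh => ht (Fin.ext hh)
    simp [this]
  · simp

lemma sum_ite_val {N : ℕ} (m : ℕ) (f : Fin N → ℝ) :
    ∑ k : Fin N, (if (k:ℕ) = m then 1 else 0) * f k
      = if h : m < N then f ⟨m, h⟩ else 0 := by
  split_ifs with h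
  · rw [Finset.sum_eq_single (⟨m, h⟩ : Fin N)]
    · simp
    · intro t _ ht
      have : (t:ℕ) ≠ m := fun hh => ht (Fin.ext hh)
      simp [this]
    · simp
  · apply Finset.sum_eq_zero
    intro t _
    have : (t:ℕ) ≠ m := fun hh => h (hh ▸ t.isLt)
    simp [this]



open Complex in
lemma cos_sum_eq (n : ℕ) (hn : 0 < n) (m : ℤ) (hm : ¬ ((2*(n:ℤ)) ∣ m)) :
    ∑ k ∈ Finset.range n, Real.cos (m * k * Real.pi / n) = if (2:ℤ) ∣ m then 0 else 1 := by
  have hn' : (n:ℂ) ≠ 0 := Nat.cast_ne_zero.2 hn.ne'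
  have hnR : (n:ℝ) ≠ 0 := Nat.cast_ne_zero.2 hn.ne'
  have hπ : (Real.pi : ℂ) ≠ 0 := by exact_mod_cast Real.pi_ne_zero
  set z : ℂ := Complex.exp ((m * Real.pi / n : ℝ) * I) with hzdef
  have hzk : ∀ k : ℕ, z ^ k = Complex.exp ((m * k * Real.pi / n : ℝ) * I) := by
    intro k
    rw [hzdef, ← Complex.exp_nat_mul]
    congr 1
    push_cast
    ring
  have habs : Complex.normSq z = 1 := by
    have := Complex.norm_exp_ofReal_mul_I (m * Real.pi / n)
    rw [← hzdef] at this
    rw [← Complex.sq_norm, this]; norm_num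
  have hz1 : z ≠ 1 := by
    intro h
    rw [hzdef, Complex.exp_eq_one_iff] at h
    obtain ⟨k, hk⟩ := h
    apply hm
    push_cast at hk
    have h2 : (m : ℂ) * Real.pi * I = k * (2 * Real.pi * I) * n := by
      field_simp at hk ⊢; linear_combination hk
    have h3 : (m : ℂ) = 2 * n * k :=
      mul_right_cancel₀ (mul_ne_zero hπ Complex.I_ne_zero) (by linear_combination h2)
    have : m = 2 * n * k := by exact_mod_cast h3
    exact ⟨k, this⟩
  have hsum : ∑ k ∈ Finset.range n, Real.cos (m * k * Real.pi / n)
      = ((z ^ n - 1) / (z - 1)).re := by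
    rw [← geom_sum_eq hz1, Complex.re_sum]
    refine Finset.sum_congr rfl fun k _ => ?_
    rw [hzk k, Complex.exp_ofReal_mul_I_re]
  have hzn : z ^ n = Complex.exp ((m * Real.pi : ℝ) * I) := by
    rw [hzk n]
    congr 2
    push_cast
    field_simp
  rw [hsum]
  rcases Int.even_or_odd m with ⟨t, ht⟩ | ⟨t, ht⟩
  · have hd : (2:ℤ) ∣ m := ⟨t, by omega⟩
    have : z ^ n = 1 := by
      rw [hzn, ← Complex.exp_int_mul_two_pi_mul_I t]
      congr 1
      push_cast [ht]
      ring
    rw [this]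
    simp [hd]
  · have hd : ¬ (2:ℤ) ∣ m := by omega
    have hzn' : z ^ n = -1 := by
      rw [hzn, show ((m * Real.pi : ℝ) : ℂ) * I = t * (2 * Real.pi * I) + Real.pi * I by
        push_cast [ht]; ring, Complex.exp_add, Complex.exp_int_mul_two_pi_mul_I,
        Complex.exp_pi_mul_I]
      ring
    have hre1 : z.re ≠ 1 := by
      intro h
      apply hz1
      have him : z.im = 0 := by
        have := habs
        rw [Complex.normSq_apply, h] at this
        nlinarith
      apply Complex.ext <;> simp [h, him]
    rw [hzn']
    have hns : Complex.normSq (z - 1) = 2 - 2 * z.re := by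
      rw [Complex.normSq_apply]
      simp only [Complex.sub_re, Complex.sub_im, Complex.one_re, Complex.one_im]
      have := habs
      rw [Complex.normSq_apply] at this
      nlinarith
    rw [Complex.div_re, hns]
    simp only [Complex.sub_re, Complex.sub_im, Complex.one_re, Complex.one_im]
    norm_num
    rw [if_neg hd]
    have h2 : (2:ℝ) - 2 * z.re ≠ 0 := by
      intro h; apply hre1; linarith
    field_simp
    ring

lemma sin_orth (n a b : ℕ) (hn : 2 ≤ n) (ha : 1 ≤ a) (ha' : a < n) (hb : 1 ≤ b) (hb' : b < n) :
    ∑ k ∈ Finset.range n, Real.sin (a * k * Real.pi / n) * Real.sin (b * k * Real.pi / n)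
      = if a = b then (n:ℝ) / 2 else 0 := by
  have hn0 : 0 < n := by omega
  have hnR : (n:ℝ) ≠ 0 := Nat.cast_ne_zero.2 hn0.ne'
  have key : ∀ k ∈ Finset.range n, Real.sin (a * k * Real.pi / n) * Real.sin (b * k * Real.pi / n)
      = (Real.cos ((((a:ℤ) - b) : ℤ) * k * Real.pi / n)
          - Real.cos ((((a:ℤ) + b) : ℤ) * k * Real.pi / n)) / 2 := by
    intro k _
    have h1 : ((((a:ℤ) - b) : ℤ) : ℝ) * k * Real.pi / n
        = a * k * Real.pi / n - b * k * Real.pi / n := by push_cast; ring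
    have h2 : ((((a:ℤ) + b) : ℤ) : ℝ) * k * Real.pi / n
        = a * k * Real.pi / n + b * k * Real.pi / n := by push_cast; ring
    rw [h1, h2, Real.cos_sub, Real.cos_add]; ring
  rw [Finset.sum_congr rfl key, ← Finset.sum_div, Finset.sum_sub_distrib]
  have hsum2 : ∑ k ∈ Finset.range n, Real.cos ((((a:ℤ) + b) : ℤ) * k * Real.pi / n)
      = if (2:ℤ) ∣ ((a:ℤ) + b) then 0 else 1 := by
    apply cos_sum_eq n hn0
    intro ⟨c, hc⟩
    have h1 : (1:ℤ) ≤ (a:ℤ) + b := by exact_mod_cast by omega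
    have h2 : (a:ℤ) + b ≤ 2*n - 2 := by push_cast; omega
    have hc1 : (0:ℤ) < c ∧ c < 1 := by constructor <;> nlinarith
    omega
  by_cases hab : a = b
  · subst hab
    have hsum1 : ∑ k ∈ Finset.range n, Real.cos ((((a:ℤ) - a) : ℤ) * k * Real.pi / n) = n := by
      have : ∀ k ∈ Finset.range n, Real.cos ((((a:ℤ) - a) : ℤ) * k * Real.pi / n) = 1 := by
        intro k _; norm_num
      rw [Finset.sum_congr rfl this]; simp
    rw [hsum1, hsum2, if_pos rfl, if_pos ⟨a, by push_cast; ring⟩]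
    ring
  · have hsum1 : ∑ k ∈ Finset.range n, Real.cos ((((a:ℤ) - b) : ℤ) * k * Real.pi / n)
        = if (2:ℤ) ∣ ((a:ℤ) - b) then 0 else 1 := by
      apply cos_sum_eq n hn0
      intro ⟨c, hc⟩
      have h2 : (a:ℤ) - b ≠ 0 := by
        intro h; apply hab; omega
      have h3 : -(2*(n:ℤ)) < (a:ℤ) - b ∧ (a:ℤ) - b < 2*n := by push_cast; omega
      have hc0 : c = 0 := by nlinarith [h3.1, h3.2]
      rw [hc0, mul_zero] at hc
      omega
    rw [hsum1, hsum2, if_neg hab]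
    have hpar : ((2:ℤ) ∣ ((a:ℤ) - b)) ↔ ((2:ℤ) ∣ ((a:ℤ) + b)) := by omega
    by_cases h : (2:ℤ) ∣ ((a:ℤ) - b)
    · rw [if_pos h, if_pos (hpar.1 h)]; ring
    · rw [if_neg h, if_neg (fun hh => h (hpar.2 hh))]; ring

lemma S_mul_S (n : ℕ) (hn : 2 ≤ n) : Smat n * Smat n = 1 := by
  have hn0 : 0 < n := by omega
  have hnR : (n:ℝ) ≠ 0 := Nat.cast_ne_zero.2 hn0.ne'
  ext j l
  set a : ℕ := (j : ℕ) + 1 with hadef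
  set b : ℕ := (l : ℕ) + 1 with hbdef
  set g : ℕ → ℝ := fun k => Real.sin (a * k * Real.pi / n) * Real.sin (b * k * Real.pi / n)
    with hgdef
  have hsq : Real.sqrt (2 / n) * Real.sqrt (2 / n) = 2 / n :=
    Real.mul_self_sqrt (by positivity)
  have hentry : (Smat n * Smat n) j l = (2 / n) * ∑ k : Fin (n-1), g ((k:ℕ) + 1) := by
    rw [Matrix.mul_apply, Finset.mul_sum]
    refine Finset.sum_congr rfl fun k _ => ?_
    simp only [Smat, Matrix.of_apply, hgdef]
    rw [mul_mul_mul_comm, hsq]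
    congr 2 <;> push_cast [hadef, hbdef] <;> ring
  have hshift : ∑ k : Fin (n-1), g ((k:ℕ) + 1) = ∑ k ∈ Finset.range n, g k := by
    rw [Fin.sum_univ_eq_sum_range (fun k => g (k+1)) (n-1)]
    conv_rhs => rw [show n = (n-1)+1 by omega]
    rw [Finset.sum_range_succ' g (n-1)]
    simp [hgdef]
  rw [hentry, hshift, sin_orth n a b hn (by omega) (by omega : a < n) (by omega)
    (by omega : b < n)]
  have hab : a = b ↔ j = l := by
    rw [hadef, hbdef, Fin.ext_iff]; omega
  by_cases h : j = l
  · rw [if_pos (hab.2 h)]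
    simp [Matrix.one_apply, h]
    omega
  · rw [if_neg (fun hh => h (hab.1 hh))]
    simp [Matrix.one_apply, h]

noncomputable def Tmat (n : ℕ) (ε : ℝ) : Matrix (Fin (n - 1)) (Fin (n - 1)) ℝ :=
  Matrix.of fun j k =>
    (if (j:ℕ) = (k:ℕ) then 2 else 0)
      - ε * ((if (k:ℕ) = (j:ℕ) + 1 then 1 else 0) + (if (j:ℕ) = (k:ℕ) + 1 then 1 else 0))

lemma GGt_eq (n : ℕ) (hn : 2 ≤ n) : Gmat n * (Gmat n)ᵀ = Tmat n 1 := by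
  ext j k
  rw [Matrix.mul_apply]
  simp only [Gmat, Emat, Zmat, Matrix.sub_apply, Matrix.of_apply, Matrix.transpose_apply,
    sub_mul, mul_sub, Finset.sum_sub_distrib]
  have hj := j.isLt
  have hk := k.isLt
  have h1 : ((j:ℕ)+1) < n := by omega
  have h2 : ((j:ℕ)) < n := by omega
  rw [sum_ind _ _ h1, sum_ind _ _ h1, sum_ind _ _ h2, sum_ind _ _ h2]
  simp only [Tmat, Matrix.of_apply]
  split_ifs <;> first | (exfalso; omega) | norm_num

lemma HHt_eq (n : ℕ) (hn : 2 ≤ n) : Hmat n * (Hmat n)ᵀ = Tmat n (-1) := by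
  ext j k
  rw [Matrix.mul_apply]
  simp only [Hmat, Emat, Zmat, Matrix.add_apply, Matrix.of_apply, Matrix.transpose_apply,
    add_mul, mul_add, Finset.sum_add_distrib]
  have hj := j.isLt
  have hk := k.isLt
  have h1 : ((j:ℕ)+1) < n := by omega
  have h2 : ((j:ℕ)) < n := by omega
  rw [sum_ind _ _ h1, sum_ind _ _ h1, sum_ind _ _ h2, sum_ind _ _ h2]
  simp only [Tmat, Matrix.of_apply]
  split_ifs <;> first | (exfalso; omega) | norm_num

lemma T_mul_S (n : ℕ) (hn : 2 ≤ n) (ε : ℝ) :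
    Tmat n ε * Smat n
      = Smat n * Matrix.diagonal (fun l : Fin (n-1) => 2 - 2 * ε * Real.cos (((l:ℕ)+1) * Real.pi / n)) := by
  have hn0 : 0 < n := by omega
  have hnR : (n:ℝ) ≠ 0 := Nat.cast_ne_zero.2 hn0.ne'
  ext j l
  rw [Matrix.mul_apply, Matrix.mul_diagonal]
  set x : ℝ := ((l:ℕ)+1) * Real.pi / n with hx
  set c : ℝ := Real.sqrt (2 / n) with hc
  set s : ℕ → ℝ := fun r => Real.sin (r * x) with hs
  have hS : ∀ k : Fin (n-1), Smat n k l = c * s ((k:ℕ)+1) := by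
    intro k
    simp only [Smat, Matrix.of_apply, hs, hc, hx]
    congr 1
    push_cast
    ring
  have hsn : s n = 0 := by
    have : (n:ℝ) * x = ((l:ℕ)+1) * Real.pi := by rw [hx]; field_simp
    simp only [hs, this]
    exact_mod_cast Real.sin_nat_mul_pi ((l:ℕ)+1)
  have hj := j.isLt
  have h1 : ∑ k : Fin (n-1), (if (k:ℕ) = (j:ℕ) then (1:ℝ) else 0) * (c * s ((k:ℕ)+1))
      = c * s ((j:ℕ)+1) := by
    rw [sum_ite_val (j:ℕ) (fun k => c * s ((k:ℕ)+1)), dif_pos hj]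
  have h2 : ∑ k : Fin (n-1), (if (k:ℕ) = (j:ℕ)+1 then (1:ℝ) else 0) * (c * s ((k:ℕ)+1))
      = c * s ((j:ℕ)+2) := by
    rw [sum_ite_val ((j:ℕ)+1) (fun k => c * s ((k:ℕ)+1))]
    split_ifs with h
    · norm_num
    · rw [show (j:ℕ)+2 = n by omega, hsn]
      ring
  have h3 : ∑ k : Fin (n-1), (if (j:ℕ) = (k:ℕ)+1 then (1:ℝ) else 0) * (c * s ((k:ℕ)+1))
      = c * s (j:ℕ) := by
    rcases Nat.eq_zero_or_pos (j:ℕ) with h0 | h0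
    · rw [h0]
      rw [Finset.sum_eq_zero (fun k _ => by norm_num)]
      simp [hs]
    · have econd : ∀ k : Fin (n-1), (if (j:ℕ) = (k:ℕ)+1 then (1:ℝ) else 0)
          = (if (k:ℕ) = (j:ℕ)-1 then 1 else 0) := by
        intro k
        split_ifs <;> first | (exfalso; omega) | norm_num
      rw [Finset.sum_congr rfl (fun k _ => by rw [econd k]),
        sum_ite_val ((j:ℕ)-1) (fun k => c * s ((k:ℕ)+1)), dif_pos (by omega : (j:ℕ)-1 < n-1)]
      congr 2
      simp
      omega
  have hsum : ∑ k : Fin (n-1), Tmat n ε j k * Smat n k l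
      = 2 * (c * s ((j:ℕ)+1)) - ε * (c * s ((j:ℕ)+2) + c * s (j:ℕ)) := by
    have expand : ∀ k : Fin (n-1), Tmat n ε j k * Smat n k l
        = 2 * ((if (k:ℕ) = (j:ℕ) then 1 else 0) * (c * s ((k:ℕ)+1)))
          - ε * ((if (k:ℕ) = (j:ℕ)+1 then 1 else 0) * (c * s ((k:ℕ)+1))
              + (if (j:ℕ) = (k:ℕ)+1 then 1 else 0) * (c * s ((k:ℕ)+1))) := by
      intro k
      rw [hS k]
      simp only [Tmat, Matrix.of_apply]
      by_cases hk : (j:ℕ) = (k:ℕ)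
      · rw [if_pos hk, if_pos hk.symm]; ring
      · rw [if_neg hk, if_neg (show ¬(k:ℕ) = (j:ℕ) from fun hh => hk hh.symm)]; ring
    rw [Finset.sum_congr rfl (fun k _ => expand k), Finset.sum_sub_distrib,
      ← Finset.mul_sum, ← Finset.mul_sum, Finset.sum_add_distrib, h1, h2, h3]
  rw [hsum, hS j]
  have htrig : s ((j:ℕ)+2) + s (j:ℕ) = 2 * s ((j:ℕ)+1) * Real.cos x := by
    simp only [hs]
    push_cast
    rw [show ((j:ℕ):ℝ)*x = (((j:ℕ):ℝ)+1)*x - x by ring,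
      show (((j:ℕ):ℝ)+2)*x = (((j:ℕ):ℝ)+1)*x + x by ring, Real.sin_add, Real.sin_sub]
    ring
  linear_combination (-(ε*c)) * htrig


lemma lam_eq (n : ℕ) :
    lamGG n = fun l : Fin (n-1) => 2 - 2 * (1:ℝ) * Real.cos (((l:ℕ)+1) * Real.pi / n) := by
  funext l
  unfold lamGG
  rw [show (((l:ℕ):ℝ)+1) * Real.pi / (2*n) = (((l:ℕ)+1) * Real.pi / n) / 2 by ring,
    Real.sin_sq_eq_half_sub]
  rw [show 2 * ((((l:ℕ):ℝ)+1) * Real.pi / n / 2) = ((l:ℕ)+1) * Real.pi / n by ring]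
  ring

lemma mu_eq (n : ℕ) :
    muHH n = fun l : Fin (n-1) => 2 - 2 * (-1:ℝ) * Real.cos (((l:ℕ)+1) * Real.pi / n) := by
  funext l
  unfold muHH
  rw [show (((l:ℕ):ℝ)+1) * Real.pi / (2*n) = (((l:ℕ)+1) * Real.pi / n) / 2 by ring,
    Real.cos_sq]
  rw [show 2 * ((((l:ℕ):ℝ)+1) * Real.pi / n / 2) = ((l:ℕ)+1) * Real.pi / n by ring]
  ring

lemma A1_eq (n : ℕ) (hn : 2 ≤ n) :
    Gmat n * (Gmat n)ᵀ = Smat n * Matrix.diagonal (lamGG n) * Smat n := by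
  calc Gmat n * (Gmat n)ᵀ = Tmat n 1 := GGt_eq n hn
    _ = Tmat n 1 * (Smat n * Smat n) := by rw [S_mul_S n hn, mul_one]
    _ = (Tmat n 1 * Smat n) * Smat n := by rw [mul_assoc]
    _ = Smat n * Matrix.diagonal (lamGG n) * Smat n := by
        rw [T_mul_S n hn 1, lam_eq n]

lemma A2_eq (n : ℕ) (hn : 2 ≤ n) :
    Hmat n * (Hmat n)ᵀ = Smat n * Matrix.diagonal (muHH n) * Smat n := by
  calc Hmat n * (Hmat n)ᵀ = Tmat n (-1) := HHt_eq n hn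
    _ = Tmat n (-1) * (Smat n * Smat n) := by rw [S_mul_S n hn, mul_one]
    _ = (Tmat n (-1) * Smat n) * Smat n := by rw [mul_assoc]
    _ = Smat n * Matrix.diagonal (muHH n) * Smat n := by
        rw [T_mul_S n hn (-1), mu_eq n]

theorem stmt7 (n : ℕ) (hn : 2 ≤ n) :
    ((Gmat n * (Gmat n)ᵀ) ⊗ₖ (Hmat n * (Hmat n)ᵀ) +
        (Hmat n * (Hmat n)ᵀ) ⊗ₖ (Gmat n * (Gmat n)ᵀ) =
      (Smat n ⊗ₖ Smat n) *
        (Matrix.diagonal (lamGG n) ⊗ₖ Matrix.diagonal (muHH n) +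
          Matrix.diagonal (muHH n) ⊗ₖ Matrix.diagonal (lamGG n)) *
        (Smat n ⊗ₖ Smat n)) ∧
    Matrix.diagonal (lamGG n) ⊗ₖ Matrix.diagonal (muHH n) +
        Matrix.diagonal (muHH n) ⊗ₖ Matrix.diagonal (lamGG n) =
      Matrix.diagonal (fun p : Fin (n - 1) × Fin (n - 1) =>
        lamGG n p.1 * muHH n p.2 + muHH n p.1 * lamGG n p.2) := by
  constructor
  · rw [A1_eq n hn, A2_eq n hn, Matrix.mul_add, Matrix.add_mul,
      ← Matrix.mul_kronecker_mul, ← Matrix.mul_kronecker_mul,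
      ← Matrix.mul_kronecker_mul, ← Matrix.mul_kronecker_mul]
  · rw [Matrix.diagonal_kronecker_diagonal, Matrix.diagonal_kronecker_diagonal,
      Matrix.diagonal_add]
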